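/- In the endomorphism monoid End₁ of the regular representation (RF₁, F₁) of the infinite cyclic group F₁ = ⟨x⟩ over a commutative ring R: an endomorphism ν_{(w,e)} with w = Σ rₙxⁿ satisfying Σ rₙ = 1 is a right unit of the ideal T_e (i.e., ν ∘ ν_{(w,e)} = ν for every ν ∈ T_e). -/

import Mathlib

open LaurentPolynomial

/-- An endomorphism of the regular representation `(W₁, F₁) = (RF₁, F₁)` of the infinite cyclic
group `F₁ = ⟨x⟩` over `R`: an `R`-linear endomorphism `f` of the group algebra
`RF₁ = R[T;T⁻¹]` together with an endomorphism `φ` of the (additively written) infinite cyclic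
group `ℤ`, compatible with the action of the group by multiplication. -/
structure End1 (R : Type*) [CommRing R] where
  f : LaurentPolynomial R →ₗ[R] LaurentPolynomial R
  φ : ℤ →+ ℤ
  compat : ∀ (a : LaurentPolynomial R) (n : ℤ), f (a * T n) = f a * T (φ n)

variable {R : Type*} [CommRing R]

/-- Composition of endomorphisms makes `End1 R` a monoid; `ν ∘ μ` has components
`ν.f ∘ μ.f` and `ν.φ ∘ μ.φ`. -/
noncomputable instance : Mul (End1 R) :=
  ⟨fun z u => ⟨z.f ∘ₗ u.f, z.φ.comp u.φ, fun a n => by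
    simp [LinearMap.comp_apply, u.compat, z.compat]⟩⟩

/-- The identity endomorphism `ν_{(1,x)}`. -/
noncomputable instance : One (End1 R) :=
  ⟨⟨LinearMap.id, AddMonoidHom.id ℤ, fun a n => rfl⟩⟩

theorem End1.ext' {a b : End1 R} (hf : a.f = b.f) (hφ : a.φ = b.φ) : a = b := by
  cases a; cases b; cases hf; cases hφ; rfl

theorem single_eq_smul_T (r : R) (n : ℤ) :
    (AddMonoidAlgebra.single n r : LaurentPolynomial R) = r • T n := by
  rw [T, AddMonoidAlgebra.smul_single, smul_eq_mul, mul_one]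

/-- In `End₁`, an endomorphism `ν_{(w,e)}` whose element `w = Σ rₙxⁿ` has augmentation
`Σ rₙ = 1` is a right unit of the ideal `T_e`: `ν ∘ ν_{(w,e)} = ν` for every `ν ∈ T_e`. -/
theorem stmt11 (u : End1 R) (hu : u.φ = 0)
    (haug : ((AddMonoidAlgebra.coeff (u.f 1 : LaurentPolynomial R)).sum fun _ r => r) = 1)
    (z : End1 R) (hz : z.φ = 0) :
    z * u = z := by
  have hzT : ∀ n : ℤ, z.f (T n) = z.f 1 := fun n => by
    have := z.compat 1 n
    simpa [hz] using this
  have huT : ∀ n : ℤ, u.f (T n) = u.f 1 := fun n => by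
    have := u.compat 1 n
    simpa [hu] using this
  -- z.f depends only on the augmentation
  have hkey : ∀ w : LaurentPolynomial R,
      z.f w = ((AddMonoidAlgebra.coeff w).sum fun _ c => c) • z.f 1 := by
    intro w
    induction w using AddMonoidAlgebra.induction_linear with
    | zero => simp
    | add f g hf hg =>
        rw [map_add, hf, hg, ← add_smul, AddMonoidAlgebra.coeff_add,
          Finsupp.sum_add_index (fun _ _ => rfl) (fun _ _ _ _ => rfl)]
    | single n r =>
        rw [single_eq_smul_T, map_smul, hzT, ← single_eq_smul_T, AddMonoidAlgebra.coeff_single,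
          Finsupp.sum_single_index (rfl : (0:R) = 0)]
  -- u.f preserves the augmentation
  have haug2 : ∀ a : LaurentPolynomial R,
      ((AddMonoidAlgebra.coeff (u.f a)).sum fun _ c => c) = (AddMonoidAlgebra.coeff a).sum fun _ c => c := by
    intro a
    induction a using AddMonoidAlgebra.induction_linear with
    | zero => simp
    | add f g hf hg =>
        rw [map_add, AddMonoidAlgebra.coeff_add, Finsupp.sum_add_index (fun _ _ => rfl) (fun _ _ _ _ => rfl),
          hf, hg, AddMonoidAlgebra.coeff_add, Finsupp.sum_add_index (fun _ _ => rfl) (fun _ _ _ _ => rfl)]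
    | single n r =>
        rw [single_eq_smul_T, map_smul, huT, ← single_eq_smul_T, AddMonoidAlgebra.coeff_single,
          Finsupp.sum_single_index (rfl : (0:R) = 0), AddMonoidAlgebra.coeff_smul,
          Finsupp.sum_smul_index (fun _ => rfl), ← Finsupp.mul_sum, haug, mul_one]
  apply End1.ext'
  · refine LinearMap.ext fun a => ?_
    show z.f (u.f a) = z.f a
    rw [hkey (u.f a), haug2, ← hkey]
  · show z.φ.comp u.φ = z.φ
    rw [hz, hu]; rfl
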